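/- Let F = ℂ⟨α, β⟩ and γ the swap automorphism. The fixed subalgebra F^{ℤ/2} requires, for each n ≥ 2, at least one generator of degree n in any homogeneous generating set; in particular, the minimal number of generators of F^{ℤ/2} in degrees ≤ N grows at least linearly in N. -/

import Mathlib

/-- The swap automorphism of `F = ℂ⟨α, β⟩`. -/
noncomputable def swapAlg : FreeAlgebra ℂ (Fin 2) →ₐ[ℂ] FreeAlgebra ℂ (Fin 2) :=
  FreeAlgebra.lift ℂ fun i => FreeAlgebra.ι ℂ (1 - i)

/-- Interpretation of a word as a product of generators. -/
noncomputable def wordToAlg : FreeMonoid (Fin 2) →* FreeAlgebra ℂ (Fin 2) :=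
  FreeMonoid.lift (FreeAlgebra.ι ℂ)

/-- The degree-`n` homogeneous component of `ℂ⟨α, β⟩` (span of the words of length `n`). -/
noncomputable def degComp (n : ℕ) : Submodule ℂ (FreeAlgebra ℂ (Fin 2)) :=
  Submodule.span ℂ
    {x | ∃ w : FreeMonoid (Fin 2), (FreeMonoid.toList w).length = n ∧ x = wordToAlg w}

namespace Stmt10Aux

/-- Letter swap. -/
def σ : Fin 2 → Fin 2 := fun i => 1 - i

lemma σσ (a : Fin 2) : σ (σ a) = a := by fin_cases a <;> decide

lemma σ_eq_iff (a b : Fin 2) : σ a = b ↔ ¬ a = b := by fin_cases a <;> fin_cases b <;> decide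

noncomputable abbrev E : FreeAlgebra ℂ (Fin 2) ≃ₐ[ℂ] MonoidAlgebra ℂ (FreeMonoid (Fin 2)) :=
  FreeAlgebra.equivMonoidAlgebraFreeMonoid

lemma E_word (w : FreeMonoid (Fin 2)) : E (wordToAlg w) = MonoidAlgebra.single w 1 := by
  induction w using FreeMonoid.inductionOn with
  | one => simp [wordToAlg, MonoidAlgebra.one_def]
  | of x => simp [wordToAlg, FreeAlgebra.equivMonoidAlgebraFreeMonoid]
  | mul x y hx hy =>
      rw [map_mul, map_mul, hx, hy, MonoidAlgebra.single_mul_single, one_mul]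

lemma swap_word (w : FreeMonoid (Fin 2)) :
    swapAlg (wordToAlg w) = wordToAlg (FreeMonoid.map σ w) := by
  induction w using FreeMonoid.inductionOn with
  | one => simp
  | of x => simp [wordToAlg, swapAlg, σ]
  | mul x y hx hy => simp only [map_mul, hx, hy]

lemma toList_map (w : FreeMonoid (Fin 2)) :
    FreeMonoid.toList (FreeMonoid.map σ w) = (FreeMonoid.toList w).map σ := by
  induction w using FreeMonoid.inductionOn with
  | one => simp
  | of x => simp [FreeMonoid.map_of]
  | mul x y hx hy => simp [FreeMonoid.toList_mul, hx, hy]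

lemma map_map_σ (w : FreeMonoid (Fin 2)) : FreeMonoid.map σ (FreeMonoid.map σ w) = w := by
  apply FreeMonoid.toList.injective
  rw [toList_map, toList_map, List.map_map, show σ ∘ σ = id from funext σσ, List.map_id]

/-- Number of adjacent unequal pairs. -/
def dcount : List (Fin 2) → ℕ
  | a :: b :: l => (if a = b then 0 else 1) + dcount (b :: l)
  | _ => 0

lemma dcount_replicate (k : ℕ) (c : Fin 2) : dcount (List.replicate k c) = 0 := by
  induction k with
  | zero => rfl
  | succ m ih =>
      cases m with
      | zero => rfl
      | succ m' =>
          rw [List.replicate_succ, List.replicate_succ]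
          show (if c = c then 0 else 1) + dcount (c :: List.replicate m' c) = 0
          rw [if_pos rfl, zero_add, ← List.replicate_succ]
          exact ih

/-- The sign functional on words of length `n`. -/
noncomputable def f (n : ℕ) (w : FreeMonoid (Fin 2)) : ℂ :=
  if (FreeMonoid.toList w).length = n then (-1 : ℂ) ^ dcount (FreeMonoid.toList w) else 0

lemma sign_flip_prefix (v : List (Fin 2)) (hv : v ≠ []) :
    ∀ u : List (Fin 2), u ≠ [] →
      ((-1 : ℂ)) ^ dcount (u.map σ ++ v) = -(-1 : ℂ) ^ dcount (u ++ v) := by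
  intro u
  induction u with
  | nil => intro h; exact absurd rfl h
  | cons a u ih =>
      intro _
      cases u with
      | nil =>
          obtain ⟨b, v', rfl⟩ : ∃ b v', v = b :: v' := by
            cases v with
            | nil => exact absurd rfl hv
            | cons b v' => exact ⟨b, v', rfl⟩
          simp only [List.map, List.nil_append, List.cons_append, dcount]
          by_cases hab : a = b
          · have hσn : ¬ σ a = b := by rw [σ_eq_iff]; exact fun h => h hab
            rw [if_pos hab, if_neg hσn, pow_add, pow_add, pow_one, pow_zero]
            ring
          · rw [if_neg hab, if_pos ((σ_eq_iff a b).mpr hab)]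
            rw [pow_add, pow_add, pow_one, pow_zero]
            ring
      | cons a' u' =>
          have h1 : ((a :: a' :: u').map σ ++ v) = σ a :: (σ a' :: (u'.map σ ++ v)) := by
            simp
          have h2 : ((a :: a' :: u') ++ v) = a :: (a' :: (u' ++ v)) := by simp
          rw [h1, h2]
          have e1 : dcount (σ a :: (σ a' :: (u'.map σ ++ v)))
              = (if σ a = σ a' then 0 else 1) + dcount (σ a' :: (u'.map σ ++ v)) := rfl
          have e2 : dcount (a :: (a' :: (u' ++ v)))
              = (if a = a' then 0 else 1) + dcount (a' :: (u' ++ v)) := rfl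
          have hσ : σ a = σ a' ↔ a = a' := by
            constructor
            · intro h; have := congrArg σ h; simpa [σσ] using this
            · intro h; rw [h]
          rw [e1, e2, if_congr hσ rfl rfl]
          have ih' := ih (by simp)
          have hcons : (a' :: u').map σ ++ v = σ a' :: (u'.map σ ++ v) := by simp
          have hcons2 : (a' :: u') ++ v = a' :: (u' ++ v) := by simp
          rw [hcons, hcons2] at ih'
          rw [pow_add, pow_add, ih']
          ring

lemma f_flip_prefix (n : ℕ) (u v : FreeMonoid (Fin 2))
    (hu : FreeMonoid.toList u ≠ []) (hv : FreeMonoid.toList v ≠ []) :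
    f n (FreeMonoid.map σ u * v) = - f n (u * v) := by
  unfold f
  rw [FreeMonoid.toList_mul, FreeMonoid.toList_mul, toList_map]
  have hlen : ((FreeMonoid.toList u).map σ ++ FreeMonoid.toList v).length
      = (FreeMonoid.toList u ++ FreeMonoid.toList v).length := by simp
  by_cases h : (FreeMonoid.toList u ++ FreeMonoid.toList v).length = n
  · rw [if_pos (hlen.trans h), if_pos h]
    exact sign_flip_prefix _ hv _ hu
  · rw [if_neg (fun hc => h (hlen.symm.trans hc)), if_neg h, neg_zero]

/-- The linear functional used to detect indecomposability in degree `n`. -/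
noncomputable def Λ (n : ℕ) : FreeAlgebra ℂ (Fin 2) →ₗ[ℂ] ℂ :=
  (Finsupp.linearCombination ℂ (f n)).comp
    ((MonoidAlgebra.coeffLinearEquiv ℂ).toLinearMap.comp E.toLinearMap)

lemma Λ_word (n : ℕ) (w : FreeMonoid (Fin 2)) : Λ n (wordToAlg w) = f n w := by
  rw [Λ, LinearMap.comp_apply]
  change (Finsupp.linearCombination ℂ (f n)) (E (wordToAlg w)).coeff = f n w
  rw [E_word]
  erw [Finsupp.linearCombination_single]
  rw [one_smul]

lemma Λ_off (n i : ℕ) (hne : i ≠ n) {x : FreeAlgebra ℂ (Fin 2)} (hx : x ∈ degComp i) :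
    Λ n x = 0 := by
  induction hx using Submodule.span_induction with
  | mem x hx =>
      obtain ⟨w, hw, rfl⟩ := hx
      rw [Λ_word]
      unfold f
      rw [if_neg (by rw [hw]; exact hne)]
  | zero => simp
  | add x y _ _ hx hy => rw [map_add, hx, hy, add_zero]
  | smul a x _ hx => rw [map_smul, hx, smul_zero]

/-- Span of symmetrized words of length `i`. -/
noncomputable def symSpan (i : ℕ) : Submodule ℂ (FreeAlgebra ℂ (Fin 2)) :=
  Submodule.span ℂ {x | ∃ w : FreeMonoid (Fin 2), (FreeMonoid.toList w).length = i ∧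
    x = wordToAlg w + wordToAlg (FreeMonoid.map σ w)}

lemma mem_symSpan {i : ℕ} {a : FreeAlgebra ℂ (Fin 2)} (ha : a ∈ degComp i)
    (hfa : swapAlg a = a) : a ∈ symSpan i := by
  have key : ∀ x ∈ degComp i, (2⁻¹ : ℂ) • (x + swapAlg x) ∈ symSpan i := by
    intro x hx
    induction hx using Submodule.span_induction with
    | mem x hx =>
        obtain ⟨w, hw, rfl⟩ := hx
        rw [swap_word]
        exact Submodule.smul_mem _ _ (Submodule.subset_span ⟨w, hw, rfl⟩)
    | zero => simp
    | add x y _ _ hx hy =>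
        have h : (2⁻¹ : ℂ) • (x + y + swapAlg (x + y))
            = (2⁻¹ : ℂ) • (x + swapAlg x) + (2⁻¹ : ℂ) • (y + swapAlg y) := by
          rw [map_add, ← smul_add]
          congr 1
          abel
        rw [h]
        exact Submodule.add_mem _ hx hy
    | smul c x _ hx =>
        have : (2⁻¹ : ℂ) • (c • x + swapAlg (c • x)) = c • ((2⁻¹ : ℂ) • (x + swapAlg x)) := by
          rw [map_smul, ← smul_add, smul_comm]
        rw [this]
        exact Submodule.smul_mem _ _ hx
  have := key a ha
  rw [hfa] at this
  have h2 : (2⁻¹ : ℂ) • (a + a) = a := by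
    rw [← two_smul ℂ a, smul_smul]
    norm_num
  rwa [h2] at this

lemma Λ_prod_zero (n i j : ℕ) (hi : 1 ≤ i) (hj : 1 ≤ j) (hij : i + j = n)
    {a b : FreeAlgebra ℂ (Fin 2)} (ha : a ∈ symSpan i) (hb : b ∈ symSpan j) :
    Λ n (a * b) = 0 := by
  induction ha using Submodule.span_induction with
  | mem a ha =>
      obtain ⟨u, hu, rfl⟩ := ha
      induction hb using Submodule.span_induction with
      | mem b hb =>
          obtain ⟨v, hv, rfl⟩ := hb
          have hune : FreeMonoid.toList u ≠ [] := by
            intro h; rw [h] at hu; simp at hu; omega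
          have hvne : FreeMonoid.toList v ≠ [] := by
            intro h; rw [h] at hv; simp at hv; omega
          have hvne' : FreeMonoid.toList (FreeMonoid.map σ v) ≠ [] := by
            rw [toList_map]
            intro h
            exact hvne (List.map_eq_nil_iff.mp h)
          have expand : (wordToAlg u + wordToAlg (FreeMonoid.map σ u)) *
              (wordToAlg v + wordToAlg (FreeMonoid.map σ v))
              = wordToAlg (u * v) + wordToAlg (u * FreeMonoid.map σ v)
                + wordToAlg (FreeMonoid.map σ u * v)
                + wordToAlg (FreeMonoid.map σ u * FreeMonoid.map σ v) := by
            rw [map_mul, map_mul, map_mul, map_mul, add_mul, mul_add, mul_add]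
            abel
          rw [expand, map_add, map_add, map_add, Λ_word, Λ_word, Λ_word, Λ_word]
          rw [f_flip_prefix n u v hune hvne, f_flip_prefix n u (FreeMonoid.map σ v) hune hvne']
          ring
      | zero => rw [mul_zero, map_zero]
      | add x y _ _ hx hy => rw [mul_add, map_add, hx, hy, add_zero]
      | smul c x _ hx => rw [mul_smul_comm, map_smul, hx, smul_zero]
  | zero => rw [zero_mul, map_zero]
  | add x y _ _ hx hy => rw [add_mul, map_add, hx, hy, add_zero]
  | smul c x _ hx => rw [smul_mul_assoc, map_smul, hx, smul_zero]

lemma degComp_mul {i j : ℕ} {a b : FreeAlgebra ℂ (Fin 2)}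
    (ha : a ∈ degComp i) (hb : b ∈ degComp j) : a * b ∈ degComp (i + j) := by
  induction ha using Submodule.span_induction with
  | mem a ha =>
      obtain ⟨u, hu, rfl⟩ := ha
      induction hb using Submodule.span_induction with
      | mem b hb =>
          obtain ⟨v, hv, rfl⟩ := hb
          rw [← map_mul]
          exact Submodule.subset_span ⟨u * v, by simp [FreeMonoid.toList_mul, hu, hv], rfl⟩
      | zero => rw [mul_zero]; exact Submodule.zero_mem _
      | add x y _ _ hx hy => rw [mul_add]; exact Submodule.add_mem _ hx hy
      | smul c x _ hx => rw [mul_smul_comm]; exact Submodule.smul_mem _ _ hx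
  | zero => rw [zero_mul]; exact Submodule.zero_mem _
  | add x y _ _ hx hy => rw [add_mul]; exact Submodule.add_mem _ hx hy
  | smul c x _ hx => rw [smul_mul_assoc]; exact Submodule.smul_mem _ _ hx

lemma degComp_zero_scalar {x : FreeAlgebra ℂ (Fin 2)} (hx : x ∈ degComp 0) :
    ∃ c : ℂ, x = c • 1 := by
  have hset : {y : FreeAlgebra ℂ (Fin 2) |
      ∃ w : FreeMonoid (Fin 2), (FreeMonoid.toList w).length = 0 ∧ y = wordToAlg w}
      = {(1 : FreeAlgebra ℂ (Fin 2))} := by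
    ext y
    constructor
    · rintro ⟨w, hw, rfl⟩
      have : w = 1 := by
        apply FreeMonoid.toList.injective
        rw [FreeMonoid.toList_one]
        exact List.length_eq_zero_iff.mp hw
      simp [this]
    · rintro rfl
      exact ⟨1, by simp, by simp⟩
  rw [degComp, hset, Submodule.mem_span_singleton] at hx
  obtain ⟨c, hc⟩ := hx
  exact ⟨c, hc.symm⟩

lemma support_len {i : ℕ} {x : FreeAlgebra ℂ (Fin 2)} (hx : x ∈ degComp i) :
    ∀ w ∈ (E x).coeff.support, (FreeMonoid.toList w).length = i := by
  classical
  induction hx using Submodule.span_induction with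
  | mem x hx =>
      obtain ⟨w, hw, rfl⟩ := hx
      intro v hv
      rw [E_word, MonoidAlgebra.coeff_single] at hv
      have := Finsupp.support_single_subset hv
      simp at this
      rw [this]; exact hw
  | zero => intro v hv; rw [map_zero] at hv; simp at hv
  | add x y _ _ hx hy =>
      intro v hv
      rw [map_add] at hv
      rcases Finset.mem_union.mp (Finsupp.support_add hv) with h | h
      · exact hx v h
      · exact hy v h
  | smul c x _ hx =>
      intro v hv
      rw [map_smul] at hv
      exact hx v (Finsupp.support_smul hv)

lemma degComp_disjoint {i j : ℕ} (hij : i ≠ j) {x : FreeAlgebra ℂ (Fin 2)}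
    (hxi : x ∈ degComp i) (hxj : x ∈ degComp j) : x = 0 := by
  have h1 := support_len hxi
  have h2 := support_len hxj
  have hsupp : (E x).coeff.support = ∅ := by
    by_contra h
    obtain ⟨w, hw⟩ := Finset.nonempty_of_ne_empty h
    exact hij ((h1 w hw).symm.trans (h2 w hw))
  have : E x = 0 := MonoidAlgebra.coeff_eq_zero.mp (Finsupp.support_eq_empty.mp hsupp)
  have := E.injective (this.trans (map_zero E).symm)
  exact this

end Stmt10Aux

open Stmt10Aux in
/-- Any homogeneous generating set of the fixed subalgebra `F^{ℤ/2}` contains, for each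
`n ≥ 2`, a nonzero generator of degree `n`; in particular the number of generators in
degrees `≤ N` grows at least linearly in `N`. -/
theorem stmt10 (T : Set (FreeAlgebra ℂ (Fin 2)))
    (hfix : ∀ x ∈ T, swapAlg x = x)
    (hhom : ∀ x ∈ T, ∃ i, x ∈ degComp i)
    (hgen : Algebra.adjoin ℂ T =
      AlgHom.equalizer swapAlg (AlgHom.id ℂ (FreeAlgebra ℂ (Fin 2)))) :
    (∀ n, 2 ≤ n → ∃ x ∈ T, x ≠ 0 ∧ x ∈ degComp n) ∧
    (∀ N, 2 ≤ N →
      N - 1 ≤ {x ∈ T | x ≠ 0 ∧ ∃ i, 2 ≤ i ∧ i ≤ N ∧ x ∈ degComp i}.ncard ∨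
      {x ∈ T | x ≠ 0 ∧ ∃ i, 2 ≤ i ∧ i ≤ N ∧ x ∈ degComp i}.Infinite) := by
  have part1 : ∀ n, 2 ≤ n → ∃ x ∈ T, x ≠ 0 ∧ x ∈ degComp n := by
    intro n hn
    by_contra hcon
    push_neg at hcon
    have hzero : ∀ x ∈ T, x ∈ degComp n → x = 0 := by
      intro x hxT hxn
      by_contra hx0
      exact hcon x hxT hx0 hxn
    -- Λ n vanishes on the multiplicative closure of T
    have Qclos : ∀ m ∈ Submonoid.closure T,
        swapAlg m = m ∧ (∃ i, m ∈ degComp i) ∧ Λ n m = 0 := by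
      intro m hm
      induction hm using Submonoid.closure_induction with
      | mem t ht =>
          refine ⟨hfix t ht, hhom t ht, ?_⟩
          obtain ⟨i, hi⟩ := hhom t ht
          by_cases hin : i = n
          · rw [hzero t ht (hin ▸ hi), map_zero]
          · exact Λ_off n i hin hi
      | one =>
          refine ⟨map_one _, ⟨0, Submodule.subset_span ⟨1, by simp, by simp⟩⟩, ?_⟩
          have : (1 : FreeAlgebra ℂ (Fin 2)) = wordToAlg 1 := by simp
          rw [this, Λ_word]
          unfold f
          rw [if_neg (by simp; omega)]
      | mul x y _ _ hx hy =>
          obtain ⟨hxf, ⟨i, hxi⟩, hxΛ⟩ := hx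
          obtain ⟨hyf, ⟨j, hyj⟩, hyΛ⟩ := hy
          refine ⟨by rw [map_mul, hxf, hyf], ⟨i + j, degComp_mul hxi hyj⟩, ?_⟩
          by_cases hijn : i + j = n
          · rcases Nat.eq_zero_or_pos i with hi0 | hi1
            · obtain ⟨c, rfl⟩ := degComp_zero_scalar (hi0 ▸ hxi)
              rw [smul_mul_assoc, one_mul, map_smul, hyΛ, smul_zero]
            · rcases Nat.eq_zero_or_pos j with hj0 | hj1
              · obtain ⟨c, rfl⟩ := degComp_zero_scalar (hj0 ▸ hyj)
                rw [mul_smul_comm, mul_one, map_smul, hxΛ, smul_zero]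
              · exact Λ_prod_zero n i j hi1 hj1 hijn
                  (mem_symSpan hxi hxf) (mem_symSpan hyj hyf)
          · exact Λ_off n (i + j) hijn (degComp_mul hxi hyj)
    -- the witness element
    set w0 : FreeMonoid (Fin 2) := FreeMonoid.toList.symm (List.replicate n 0) with hw0
    have hw0l : FreeMonoid.toList w0 = List.replicate n 0 := by
      simp [hw0]
    set e : FreeAlgebra ℂ (Fin 2) :=
      wordToAlg w0 + wordToAlg (FreeMonoid.map σ w0) with he
    have heq : e ∈ AlgHom.equalizer swapAlg (AlgHom.id ℂ (FreeAlgebra ℂ (Fin 2))) := by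
      rw [AlgHom.mem_equalizer]
      show swapAlg e = e
      rw [he, map_add, swap_word, swap_word, map_map_σ, add_comm]
    have hadj : e ∈ Algebra.adjoin ℂ T := by rw [hgen]; exact heq
    have hspan : e ∈ Submodule.span ℂ ((Submonoid.closure T : Submonoid _) :
        Set (FreeAlgebra ℂ (Fin 2))) := by
      rw [← Algebra.adjoin_eq_span]
      exact hadj
    have hvanish : ∀ x ∈ Submodule.span ℂ ((Submonoid.closure T : Submonoid _) :
        Set (FreeAlgebra ℂ (Fin 2))), Λ n x = 0 := by
      intro x hx
      induction hx using Submodule.span_induction with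
      | mem x hx => exact (Qclos x hx).2.2
      | zero => rw [map_zero]
      | add x y _ _ hx hy => rw [map_add, hx, hy, add_zero]
      | smul c x _ hx => rw [map_smul, hx, smul_zero]
    have hΛe0 : Λ n e = 0 := hvanish e hspan
    have hΛe2 : Λ n e = 2 := by
      rw [he, map_add, Λ_word, Λ_word]
      unfold f
      rw [toList_map, hw0l, List.map_replicate]
      rw [if_pos (by simp), if_pos (by simp)]
      rw [dcount_replicate, dcount_replicate]
      norm_num
    rw [hΛe0] at hΛe2
    exact two_ne_zero (hΛe2.symm)
  refine ⟨part1, ?_⟩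
  intro N hN
  set S : Set (FreeAlgebra ℂ (Fin 2)) :=
    {x ∈ T | x ≠ 0 ∧ ∃ i, 2 ≤ i ∧ i ≤ N ∧ x ∈ degComp i} with hS
  by_cases hfin : S.Infinite
  · right; exact hfin
  · left
    choose g hgT hg0 hgd using fun n (hn : 2 ≤ n) => part1 n hn
    -- build an injection from Icc 2 N into S
    classical
    set g' : ℕ → FreeAlgebra ℂ (Fin 2) := fun n =>
      if h : 2 ≤ n then g n h else 0 with hg'
    have himg : g' '' (↑(Finset.Icc 2 N) : Set ℕ) ⊆ S := by
      rintro _ ⟨m, hm, rfl⟩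
      simp only [Finset.coe_Icc, Set.mem_Icc] at hm
      have h2m : 2 ≤ m := hm.1
      rw [hg']
      simp only [dif_pos h2m]
      exact ⟨hgT m h2m, hg0 m h2m, m, h2m, hm.2, hgd m h2m⟩
    have hinj : Set.InjOn g' (↑(Finset.Icc 2 N) : Set ℕ) := by
      intro a ha b hb hab
      simp only [Finset.coe_Icc, Set.mem_Icc] at ha hb
      rw [hg'] at hab
      simp only [dif_pos ha.1, dif_pos hb.1] at hab
      by_contra hne
      have h1 : g a ha.1 ∈ degComp a := hgd a ha.1
      have h2 : g a ha.1 ∈ degComp b := hab ▸ hgd b hb.1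
      exact hg0 a ha.1 (degComp_disjoint hne h1 h2)
    have hcard : (g' '' (↑(Finset.Icc 2 N) : Set ℕ)).ncard = N - 1 := by
      rw [Set.ncard_image_of_injOn hinj, Set.ncard_coe_finset, Nat.card_Icc]
      omega
    calc N - 1 = (g' '' (↑(Finset.Icc 2 N) : Set ℕ)).ncard := hcard.symm
      _ ≤ S.ncard := Set.ncard_le_ncard himg (Set.not_infinite.mp hfin)
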